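/- Let B = {x ∈ ℝ^d : ‖x‖₂ ≤ r}, let η, μ₂ ≥ 0, μ₁ ≥ 0, and z ∈ ℝ^d. Then the unique minimizer over B of x ↦ (1/2)‖x − z‖₂² + η( (μ₁/2)‖x‖₂² + μ₂‖x‖₁ ) is x⁺ = P_B[ (1/(ημ₁+1)) · sign(z) ∘ [|z| − ημ₂]₊ ], where |z| = (|z₁|, ..., |z_d|), sign(z) = (sign(z₁), ..., sign(z_d)), [·]₊ is the componentwise positive part, ∘ denotes the elementwise product, and P_B[y] = (r/max(‖y‖₂, r)) y is the Euclidean projection onto B. -/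

import Mathlib

open scoped BigOperators

lemma coord_key (c a t z x w : ℝ) (hc : 0 ≤ c) (ha : 0 < a) (ht : 0 ≤ t)
    (hw : a * w = Real.sign z * max (|z| - c) 0) :
    0 ≤ (a * w - z) * (x - t * w) + c * (|x| - t * |w|) := by
  set s := Real.sign z * max (|z| - c) 0 with hs
  clear_value s
  have h1 : -(c * |x|) ≤ (s - z) * x := by
    rcases le_or_gt |z| c with h | h
    · have hm : max (|z| - c) 0 = 0 := max_eq_right (by linarith)
      have hs0 : s = 0 := by rw [hs, hm, mul_zero]
      rw [hs0]
      have : z * x ≤ c * |x| :=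
        le_trans (le_abs_self _) (by rw [abs_mul]; exact mul_le_mul_of_nonneg_right h (abs_nonneg _))
      nlinarith
    · have hz : z ≠ 0 := by intro h0; rw [h0, abs_zero] at h; linarith
      have hm : max (|z| - c) 0 = |z| - c := max_eq_left (by linarith)
      rcases hz.lt_or_gt with hneg | hpos
      · have hsv : s = z + c := by
          rw [hs, hm, Real.sign_of_neg hneg, abs_of_neg hneg]; ring
        rw [hsv]
        have := neg_abs_le x
        nlinarith
      · have hsv : s = z - c := by
          rw [hs, hm, Real.sign_of_pos hpos, abs_of_pos hpos]; ring
        rw [hsv]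
        have := le_abs_self x
        nlinarith
  have h2 : (s - z) * s + c * |s| = 0 := by
    rcases le_or_gt |z| c with h | h
    · have hm : max (|z| - c) 0 = 0 := max_eq_right (by linarith)
      have hs0 : s = 0 := by rw [hs, hm, mul_zero]
      rw [hs0]; simp
    · have hz : z ≠ 0 := by intro h0; rw [h0, abs_zero] at h; linarith
      have hm : max (|z| - c) 0 = |z| - c := max_eq_left (by linarith)
      rcases hz.lt_or_gt with hneg | hpos
      · have hsv : s = z + c := by
          rw [hs, hm, Real.sign_of_neg hneg, abs_of_neg hneg]; ring
        have hzc : z + c < 0 := by have := abs_of_neg hneg; linarith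
        rw [hsv, abs_of_neg hzc]; ring
      · have hsv : s = z - c := by
          rw [hs, hm, Real.sign_of_pos hpos, abs_of_pos hpos]; ring
        have hzc : 0 ≤ z - c := by have := abs_of_pos hpos; linarith
        rw [hsv, abs_of_nonneg hzc]; ring
  have hwv : w = s / a := by
    field_simp
    linarith [hw]
  have key : (a * w - z) * (x - t * w) + c * (|x| - t * |w|) = (s - z) * x + c * |x| := by
    rw [hw, hwv, abs_div, abs_of_pos ha]
    linear_combination (-(t/a)) * h2
  rw [key]
  linarith [h1]

/-- the unique minimizer over the ball `B = {x : ‖x‖ ≤ r}` of the elastic-net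
proximal objective `x ↦ (1/2)‖x - z‖² + η((μ₁/2)‖x‖² + μ₂‖x‖₁)` is obtained by
soft-thresholding `z` by `ημ₂`, scaling by `1/(ημ₁+1)`, and projecting onto `B` via
`P_B[y] = (r / max ‖y‖ r) • y`. -/
theorem stmt_15 {d : ℕ} (r η μ₁ μ₂ : ℝ) (hr : 0 < r)
    (hη : 0 ≤ η) (hμ₁ : 0 ≤ μ₁) (hμ₂ : 0 ≤ μ₂)
    (z w xplus : EuclideanSpace ℝ (Fin d))
    (hw : ∀ i : Fin d, w i = (1 / (η * μ₁ + 1)) * (Real.sign (z i) * max (|z i| - η * μ₂) 0))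
    (hxplus : xplus = (r / max ‖w‖ r) • w) :
    ‖xplus‖ ≤ r ∧
    (∀ x : EuclideanSpace ℝ (Fin d), ‖x‖ ≤ r →
      (1 / 2) * ‖xplus - z‖ ^ 2 + η * ((μ₁ / 2) * ‖xplus‖ ^ 2 + μ₂ * ∑ i, |xplus i|) ≤
        (1 / 2) * ‖x - z‖ ^ 2 + η * ((μ₁ / 2) * ‖x‖ ^ 2 + μ₂ * ∑ i, |x i|)) ∧
    (∀ x : EuclideanSpace ℝ (Fin d), ‖x‖ ≤ r →
      (1 / 2) * ‖x - z‖ ^ 2 + η * ((μ₁ / 2) * ‖x‖ ^ 2 + μ₂ * ∑ i, |x i|) =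
        (1 / 2) * ‖xplus - z‖ ^ 2 + η * ((μ₁ / 2) * ‖xplus‖ ^ 2 + μ₂ * ∑ i, |xplus i|) →
      x = xplus) := by
  set c := η * μ₂ with hcdef
  set a := η * μ₁ + 1 with hadef
  set t := r / max ‖w‖ r with htdef
  have hc : 0 ≤ c := mul_nonneg hη hμ₂
  have ha : 0 < a := by have := mul_nonneg hη hμ₁; rw [hadef]; linarith
  have hmaxpos : 0 < max ‖w‖ r := lt_of_lt_of_le hr (le_max_right _ _)
  have ht0 : 0 < t := div_pos hr hmaxpos
  have ht1 : t ≤ 1 := (div_le_one hmaxpos).mpr (le_max_right _ _)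
  have hws : ∀ i, a * w i = Real.sign (z i) * max (|z i| - c) 0 := by
    intro i; rw [hw i]; field_simp; rw [hadef]
  have hxp : ∀ i, xplus i = t * w i := by
    intro i; rw [hxplus]; simp [PiLp.smul_apply]
  have hnsq : ∀ u : EuclideanSpace ℝ (Fin d), ‖u‖ ^ 2 = ∑ i, u i * u i := by
    intro u
    rw [EuclideanSpace.norm_eq, Real.sq_sqrt (Finset.sum_nonneg fun i _ => sq_nonneg _)]
    simp [Real.norm_eq_abs, sq_abs, sq]
  have habs : ∀ i, |xplus i| = t * |w i| := by
    intro i; rw [hxp i, abs_mul, abs_of_pos ht0]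
  have key : ∀ x : EuclideanSpace ℝ (Fin d), ‖x‖ ≤ r →
      (a / 2) * ‖x - xplus‖ ^ 2 +
        ((1 / 2) * ‖xplus - z‖ ^ 2 + η * ((μ₁ / 2) * ‖xplus‖ ^ 2 + μ₂ * ∑ i, |xplus i|)) ≤
        (1 / 2) * ‖x - z‖ ^ 2 + η * ((μ₁ / 2) * ‖x‖ ^ 2 + μ₂ * ∑ i, |x i|) := by
    intro x hx
    have hD : 0 ≤ ∑ i, ((a * w i - z i) * (x i - t * w i) + c * (|x i| - t * |w i|)) :=
      Finset.sum_nonneg fun i _ => coord_key c a t (z i) (x i) (w i) hc ha ht0.le (hws i)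
    have hE : 0 ≤ ∑ i, (t - 1) * a * (w i * x i - t * (w i * w i)) := by
      have hrw1 : ∑ i, (t - 1) * a * (w i * x i - t * (w i * w i)) =
          (t - 1) * a * ((∑ i, w i * x i) - t * ∑ i, w i * w i) := by
        simp only [Finset.mul_sum, ← Finset.sum_sub_distrib]
      rw [hrw1]
      rcases eq_or_lt_of_le ht1 with h1 | h1
      · rw [← h1]; simp
      · have hrw : r < ‖w‖ := by
          by_contra hcon
          push_neg at hcon
          have hmr : max ‖w‖ r = r := max_eq_right hcon
          rw [htdef, hmr, div_self hr.ne'] at h1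
          exact lt_irrefl 1 h1
        have hmax : max ‖w‖ r = ‖w‖ := max_eq_left hrw.le
        have hwpos : 0 < ‖w‖ := hr.trans hrw
        have htw : t * ‖w‖ = r := by rw [htdef, hmax]; field_simp
        have hCS : ∑ i, w i * x i ≤ ‖w‖ * ‖x‖ := by
          have h := real_inner_le_norm w x
          simpa [PiLp.inner_apply, RCLike.inner_apply, conj_trivial, mul_comm] using h
        have hww : ∑ i, w i * w i = ‖w‖ ^ 2 := (hnsq w).symm
        have hwx : ‖w‖ * ‖x‖ ≤ ‖w‖ * r := mul_le_mul_of_nonneg_left hx hwpos.le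
        rw [hww]
        have h5 : ‖w‖ * r = t * ‖w‖ ^ 2 := by rw [← htw]; ring
        have hq1 : ∑ i, w i * x i ≤ t * ‖w‖ ^ 2 := by linarith
        have hq2 : 0 ≤ (1 - t) * (t * ‖w‖ ^ 2 - ∑ i, w i * x i) :=
          mul_nonneg (by linarith) (by linarith)
        nlinarith [mul_nonneg ha.le hq2]
    rw [hnsq, hnsq, hnsq, hnsq, hnsq]
    simp only [habs]
    simp only [PiLp.sub_apply, hxp]
    have hmain :
        (a / 2) * (∑ i, (x i - t * w i) * (x i - t * w i)) +
          ((1 / 2) * (∑ i, (t * w i - z i) * (t * w i - z i)) +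
            η * ((μ₁ / 2) * (∑ i, (t * w i) * (t * w i)) + μ₂ * ∑ i, t * |w i|)) +
          ∑ i, (((a * w i - z i) * (x i - t * w i) + c * (|x i| - t * |w i|)) +
            (t - 1) * a * (w i * x i - t * (w i * w i))) =
        (1 / 2) * (∑ i, (x i - z i) * (x i - z i)) +
          η * ((μ₁ / 2) * (∑ i, x i * x i) + μ₂ * ∑ i, |x i|) := by
      simp only [Finset.mul_sum, mul_add, ← Finset.sum_add_distrib]
      refine Finset.sum_congr rfl fun i _ => ?_
      rw [hadef, hcdef]; ring
    have hDE : 0 ≤ ∑ i, (((a * w i - z i) * (x i - t * w i) + c * (|x i| - t * |w i|)) +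
        (t - 1) * a * (w i * x i - t * (w i * w i))) := by
      rw [Finset.sum_add_distrib]; linarith
    linarith [hmain, hDE]
  refine ⟨?_, ?_, ?_⟩
  · rw [hxplus, norm_smul, Real.norm_eq_abs, abs_of_pos ht0, htdef, div_mul_eq_mul_div,
      div_le_iff₀ hmaxpos]
    exact mul_le_mul_of_nonneg_left (le_max_left _ _) hr.le
  · intro x hx
    have h0 : 0 ≤ (a / 2) * ‖x - xplus‖ ^ 2 := by positivity
    linarith [key x hx]
  · intro x hx heq
    have hk := key x hx
    have h0 : (a / 2) * ‖x - xplus‖ ^ 2 ≤ 0 := by linarith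
    have h1 : ‖x - xplus‖ ^ 2 ≤ 0 := by nlinarith
    have h2 : ‖x - xplus‖ = 0 := by
      have := sq_nonneg ‖x - xplus‖
      have h3 : ‖x - xplus‖ ^ 2 = 0 := le_antisymm h1 this
      exact pow_eq_zero_iff two_ne_zero |>.mp h3
    exact sub_eq_zero.mp (norm_eq_zero.mp h2)
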